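/- Let n be an integer and let f_k(n) be the polynomials defined by the recursion f_0(n) = 1 and f_{k+1}(n)(u) = (n − k)·u·f_k(n)(u) + (u² − 1)·d/du[f_k(n)(u)]. Then for every natural number k and every complex number x with sin x ≠ 0, the k-th derivative of the function z ↦ (sin z)^n (integer power), evaluated at x, equals (sin x)^(n−k) · f_k(n)(cos x). -/

import Mathlib

open Polynomial

/-- The polynomials `f_k(n)` with `f_0(n) = 1` and
`f_{k+1}(n)(u) = (n - k)·u·f_k(n)(u) + (u² - 1)·d/du[f_k(n)(u)]`. -/
noncomputable def fPoly (n : ℤ) : ℕ → Polynomial ℂ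
  | 0 => 1
  | k + 1 =>
      Polynomial.C ((n : ℂ) - (k : ℂ)) * Polynomial.X * fPoly n k +
        (Polynomial.X ^ 2 - 1) * Polynomial.derivative (fPoly n k)

theorem iteratedDeriv_sin_zpow_eq_fPoly (n : ℤ) (k : ℕ) (x : ℂ)
    (hx : Complex.sin x ≠ 0) :
    iteratedDeriv k (fun z : ℂ => Complex.sin z ^ n) x =
      Complex.sin x ^ (n - (k : ℤ)) * (fPoly n k).eval (Complex.cos x) := by
  induction k generalizing x with
  | zero => simp [fPoly]
  | succ k ih =>
    have hopen : IsOpen {z : ℂ | Complex.sin z ≠ 0} :=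
      isOpen_compl_singleton.preimage Complex.continuous_sin
    have hev : (iteratedDeriv k (fun z : ℂ => Complex.sin z ^ n)) =ᶠ[nhds x]
        (fun z => Complex.sin z ^ (n - (k : ℤ)) * (fPoly n k).eval (Complex.cos z)) := by
      filter_upwards [hopen.mem_nhds hx] with z hz using ih z hz
    rw [iteratedDeriv_succ, hev.deriv_eq]
    have h1 : HasDerivAt (fun z : ℂ => Complex.sin z ^ (n - (k : ℤ)))
        (((n : ℂ) - (k : ℂ)) * Complex.sin x ^ (n - (k : ℤ) - 1) * Complex.cos x) x := by
      have := (hasDerivAt_zpow (n - (k : ℤ)) (Complex.sin x) (Or.inl hx)).comp x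
        (Complex.hasDerivAt_sin x)
      simpa [Function.comp_def, push_cast] using this
    have h2 : HasDerivAt (fun z : ℂ => (fPoly n k).eval (Complex.cos z))
        ((fPoly n k).derivative.eval (Complex.cos x) * (-Complex.sin x)) x :=
      ((fPoly n k).hasDerivAt (Complex.cos x)).comp x (Complex.hasDerivAt_cos x)
    rw [(h1.fun_mul h2).deriv]
    have hsplit : Complex.sin x ^ (n - (k : ℤ)) =
        Complex.sin x ^ (n - (k : ℤ) - 1) * Complex.sin x := by
      rw [← zpow_add_one₀ hx]; ring_nf
    have hsplit2 : Complex.sin x ^ (n - ((k : ℕ) + 1 : ℕ) : ℤ) =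
        Complex.sin x ^ (n - (k : ℤ) - 1) := by
      congr 1; push_cast; ring
    have hcs : Complex.cos x ^ 2 - 1 = -(Complex.sin x ^ 2) := by
      have := Complex.sin_sq_add_cos_sq x; linear_combination this
    simp only [fPoly, Polynomial.eval_add, Polynomial.eval_mul, Polynomial.eval_C,
      Polynomial.eval_X, Polynomial.eval_sub, Polynomial.eval_pow, Polynomial.eval_one,
      hsplit2, hsplit, hcs]
    ring
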